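/- arXiv:0912.3569 — 3 statements merged into one kernel-verified Lean document; each statement's English description precedes it below -/
import Mathlib

section
/- Let A = k{V, I} and A^! = k{V^*, I^⊥} be dual quadratic algebras over a field k, where V is finite-dimensional. The special element e_A ∈ A^! ⊗ A, defined as the image of the identity of Hom(V,V) under the canonical isomorphism Hom(V,V) ≅ V^* ⊗ V followed by the quotient maps, satisfies e_A² = 0. -/
open TensorProduct

noncomputable section

variable (k : Type*) [Field k] (V : Type*) [AddCommGroup V] [Module k V]

/-- The canonical inclusion `V ⊗ V → T(V)` of the degree two component into the
tensor algebra. -/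
def iota2 : V ⊗[k] V →ₗ[k] TensorAlgebra k V :=
  (LinearMap.mul' k (TensorAlgebra k V)) ∘ₗ
    (TensorProduct.map (TensorAlgebra.ι k) (TensorAlgebra.ι k))

/-- The relation on `T(V)` identifying the elements of `I ⊆ V ⊗ V` with `0`. -/
def quadRel (I : Submodule k (V ⊗[k] V)) (a b : TensorAlgebra k V) : Prop :=
  b = 0 ∧ a ∈ iota2 k V '' (I : Set (V ⊗[k] V))

/-- The quadratic algebra `k{V, I} = T(V)/⟨I⟩`. -/
def QuadAlgebra (I : Submodule k (V ⊗[k] V)) : Type _ := RingQuot (quadRel k V I)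

instance (I : Submodule k (V ⊗[k] V)) : Ring (QuadAlgebra k V I) :=
  inferInstanceAs (Ring (RingQuot (quadRel k V I)))
instance (I : Submodule k (V ⊗[k] V)) : Algebra k (QuadAlgebra k V I) :=
  inferInstanceAs (Algebra k (RingQuot (quadRel k V I)))

/-- The canonical quotient map `T(V) → k{V, I}`. -/
def quadMk (I : Submodule k (V ⊗[k] V)) : TensorAlgebra k V →ₐ[k] QuadAlgebra k V I :=
  RingQuot.mkAlgHom k (quadRel k V I)

/-- The annihilator `I^⊥ ⊆ V^* ⊗ V^*` of a subspace `I ⊆ V ⊗ V`: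
`I^⊥ = {α | α(w) = 0 for all w ∈ I}`, where `α` is viewed as a functional on `V ⊗ V` via the
canonical map `V^* ⊗ V^* → (V ⊗ V)^*`. -/
def perp (I : Submodule k (V ⊗[k] V)) :
    Submodule k (Module.Dual k V ⊗[k] Module.Dual k V) :=
  LinearMap.ker
    (((LinearMap.llcomp k (↥I) (V ⊗[k] V) k).flip I.subtype) ∘ₗ TensorProduct.dualDistrib k V V)

/-- The quotient map kills the image of `I`. -/
lemma quadMk_iota2_eq_zero (I : Submodule k (V ⊗[k] V)) {x : V ⊗[k] V} (hx : x ∈ I) :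
    quadMk k V I (iota2 k V x) = 0 := by
  have h := RingQuot.mkAlgHom_rel k
    (show quadRel k V I (iota2 k V x) 0 from ⟨rfl, x, hx, rfl⟩)
  rw [map_zero] at h
  exact h

lemma dualTensorHom_sum_dualBasis {W : Type*} [AddCommGroup W] [Module k W]
    {κ : Type*} [Fintype κ] [DecidableEq κ] (E : Module.Basis κ k W) :
    dualTensorHom k W W (∑ q, E.dualBasis q ⊗ₜ[k] E q) = LinearMap.id := by
  ext x
  simp [Module.Basis.coe_dualBasis, Module.Basis.coord_apply, Module.Basis.sum_repr]

/-- The canonical element `∑ ē_q ⊗ e_q` of `W^* ⊗ W` does not depend on the basis. -/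
lemma sum_dualBasis_tmul {W : Type*} [AddCommGroup W] [Module k W]
    {κ₁ κ₂ : Type*} [Fintype κ₁] [Fintype κ₂] [DecidableEq κ₁] [DecidableEq κ₂]
    (C : Module.Basis κ₁ k W) (D : Module.Basis κ₂ k W) :
    ∑ p, C.dualBasis p ⊗ₜ[k] C p = (∑ q, D.dualBasis q ⊗ₜ[k] D q :
      Module.Dual k W ⊗[k] W) := by
  apply (dualTensorHomEquivOfBasis (N := W) C).injective
  rw [dualTensorHomEquivOfBasis_apply, dualTensorHomEquivOfBasis_apply,
    dualTensorHom_sum_dualBasis, dualTensorHom_sum_dualBasis]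

lemma dualDistrib_dualBasis {ι : Type*} [Fintype ι] [DecidableEq ι] (B : Module.Basis ι k V)
    (i j : ι) :
    TensorProduct.dualDistrib k V V (B.dualBasis i ⊗ₜ[k] B.dualBasis j)
      = (B.tensorProduct B).dualBasis (i, j) := by
  apply (B.tensorProduct B).ext
  rintro ⟨i', j'⟩
  rw [Module.Basis.dualBasis_apply_self, Module.Basis.tensorProduct_apply,
    TensorProduct.dualDistrib_apply, Module.Basis.dualBasis_apply_self, Module.Basis.dualBasis_apply_self]
  by_cases h1 : i' = i <;> by_cases h2 : j' = j <;> simp [h1, h2, Prod.ext_iff]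

set_option maxHeartbeats 1000000 in
set_option synthInstance.maxHeartbeats 400000 in
/-- Let `A = k{V, I}` and `A^! = k{V^*, I^⊥}` be dual quadratic algebras,
`V` finite dimensional with basis `{vᵢ}` and dual basis `{v̄ᵢ}`.  Then the element
`e_A = Σᵢ v̄ᵢ ⊗ vᵢ` of `A^! ⊗ A` (the image of `id ∈ Hom(V,V) ≅ V^* ⊗ V` under the quotient
maps) satisfies `e_A² = 0`. -/
theorem eA_squared_eq_zero
    (ι : Type*) [Fintype ι] [DecidableEq ι] (B : Module.Basis ι k V)
    (I : Submodule k (V ⊗[k] V)) :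
    (∑ i : ι,
        (quadMk k (Module.Dual k V) (perp k V I) (TensorAlgebra.ι k (B.dualBasis i))) ⊗ₜ[k]
          (quadMk k V I (TensorAlgebra.ι k (B i))) :
      QuadAlgebra k (Module.Dual k V) (perp k V I) ⊗[k] QuadAlgebra k V I) ^ 2
      = 0 := by
  classical
  have hfin : Module.Finite k V := Module.Finite.of_basis B
  have hfree : Module.Free k V := Module.Free.of_basis B
  obtain ⟨J, hJ⟩ := Submodule.exists_isCompl I
  set bI := Module.finBasis k ↥I with hbI
  set bJ := Module.finBasis k ↥J with hbJ
  set D : Module.Basis _ k (V ⊗[k] V) :=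
    (bI.prod bJ).map (Submodule.prodEquivOfIsCompl I J hJ) with hD
  set ψ := TensorProduct.dualDistribEquivOfBasis B B with hψdef
  have hψ : ∀ x, ψ x = TensorProduct.dualDistrib k V V x := fun _ => rfl
  set Φ₁ : Module.Dual k V ⊗[k] Module.Dual k V →ₗ[k]
      QuadAlgebra k (Module.Dual k V) (perp k V I) :=
    (quadMk k (Module.Dual k V) (perp k V I)).toLinearMap ∘ₗ iota2 k (Module.Dual k V)
    with hΦ₁
  set Φ₂ : V ⊗[k] V →ₗ[k] QuadAlgebra k V I :=
    (quadMk k V I).toLinearMap ∘ₗ iota2 k V with hΦ₂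
  -- Step A : the square equals the image under `Φ₁ ⊗ Φ₂` of the canonical element of
  -- `(V^* ⊗ V^*) ⊗ (V ⊗ V)`.
  have stepA :
      (∑ i : ι,
        (quadMk k (Module.Dual k V) (perp k V I) (TensorAlgebra.ι k (B.dualBasis i))) ⊗ₜ[k]
          (quadMk k V I (TensorAlgebra.ι k (B i))) :
        QuadAlgebra k (Module.Dual k V) (perp k V I) ⊗[k] QuadAlgebra k V I) ^ 2
      = TensorProduct.map Φ₁ Φ₂
          (∑ i : ι, ∑ j : ι, (B.dualBasis i ⊗ₜ[k] B.dualBasis j) ⊗ₜ[k] (B i ⊗ₜ[k] B j)) := by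
    rw [pow_two, Finset.sum_mul_sum, map_sum]
    refine Finset.sum_congr rfl fun i _ => ?_
    rw [map_sum]
    refine Finset.sum_congr rfl fun j _ => ?_
    rw [Algebra.TensorProduct.tmul_mul_tmul, TensorProduct.map_tmul]
    congr 1
    · simp [hΦ₁, iota2, LinearMap.mul'_apply, map_mul]
    · simp [hΦ₂, iota2, LinearMap.mul'_apply, map_mul]
  -- Step B : rewrite the canonical element in terms of the adapted basis `D`.
  have stepB :
      (∑ i : ι, ∑ j : ι, (B.dualBasis i ⊗ₜ[k] B.dualBasis j) ⊗ₜ[k] (B i ⊗ₜ[k] B j))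
      = ∑ q, ψ.symm (D.dualBasis q) ⊗ₜ[k] D q := by
    apply (TensorProduct.congr ψ (LinearEquiv.refl k (V ⊗[k] V))).injective
    have e1 : ∀ i j : ι, (TensorProduct.congr ψ (LinearEquiv.refl k (V ⊗[k] V)))
        ((B.dualBasis i ⊗ₜ[k] B.dualBasis j) ⊗ₜ[k] (B i ⊗ₜ[k] B j))
        = (B.tensorProduct B).dualBasis (i, j) ⊗ₜ[k] (B.tensorProduct B) (i, j) := by
      intro i j
      rw [TensorProduct.congr_tmul, LinearEquiv.refl_apply, Module.Basis.tensorProduct_apply]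
      congr 1
      exact (hψ _).trans (dualDistrib_dualBasis k V B i j)
    have e2 : ∀ q, (TensorProduct.congr ψ (LinearEquiv.refl k (V ⊗[k] V)))
        (ψ.symm (D.dualBasis q) ⊗ₜ[k] D q) = D.dualBasis q ⊗ₜ[k] D q := by
      intro q
      rw [TensorProduct.congr_tmul, LinearEquiv.apply_symm_apply, LinearEquiv.refl_apply]
    simp only [map_sum, e1, e2]
    have h := sum_dualBasis_tmul k (B.tensorProduct B) D
    rw [Fintype.sum_prod_type] at h
    exact h
  -- The `inl` part of the adapted basis lies in `I`.
  have hDl : ∀ i, D (Sum.inl i) ∈ I := by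
    intro i
    have : D (Sum.inl i) = (bI i : V ⊗[k] V) := by
      rw [hD, Module.Basis.map_apply, Submodule.coe_prodEquivOfIsCompl',
        Module.Basis.prod_apply_inl_fst, Module.Basis.prod_apply_inl_snd]
      simp
    rw [this]
    exact (bI i).2
  -- The dual vectors of the `inr` part vanish on `I`.
  have hDr : ∀ j, ∀ x ∈ I, D.dualBasis (Sum.inr j) x = 0 := by
    intro j x hx
    rw [Module.Basis.dualBasis_apply]
    have hx2 : (Submodule.prodEquivOfIsCompl I J hJ).symm x = (⟨x, hx⟩, 0) :=
      Submodule.prodEquivOfIsCompl_symm_apply_left I J hJ ⟨x, hx⟩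
    rw [hD, Module.Basis.map_repr]
    simp only [LinearEquiv.trans_apply, hx2, Module.Basis.prod_repr_inr]
    simp
  -- hence those dual vectors pull back to `perp I`.
  have hperp : ∀ j, ψ.symm (D.dualBasis (Sum.inr j)) ∈ perp k V I := by
    intro j
    rw [perp, LinearMap.mem_ker]
    apply LinearMap.ext
    intro x
    have h : TensorProduct.dualDistrib k V V (ψ.symm (D.dualBasis (Sum.inr j)))
        = D.dualBasis (Sum.inr j) := (hψ _).symm.trans (ψ.apply_symm_apply _)
    simp only [LinearMap.coe_comp, Function.comp_apply, LinearMap.flip_apply,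
      LinearMap.llcomp_apply, LinearMap.zero_apply, h]
    exact hDr j x x.2
  -- put everything together
  rw [stepA, stepB, map_sum, Fintype.sum_sum_type]
  have z1 : ∀ i, TensorProduct.map Φ₁ Φ₂
      (ψ.symm (D.dualBasis (Sum.inl i)) ⊗ₜ[k] D (Sum.inl i)) = 0 := by
    intro i
    rw [TensorProduct.map_tmul]
    have : Φ₂ (D (Sum.inl i)) = 0 := by
      rw [hΦ₂]
      simpa using quadMk_iota2_eq_zero k V I (hDl i)
    rw [this, TensorProduct.tmul_zero]
  have z2 : ∀ j, TensorProduct.map Φ₁ Φ₂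
      (ψ.symm (D.dualBasis (Sum.inr j)) ⊗ₜ[k] D (Sum.inr j)) = 0 := by
    intro j
    rw [TensorProduct.map_tmul]
    have : Φ₁ (ψ.symm (D.dualBasis (Sum.inr j))) = 0 := by
      rw [hΦ₁]
      simpa using quadMk_iota2_eq_zero k (Module.Dual k V) (perp k V I) (hperp j)
    rw [this, TensorProduct.zero_tmul]
  simp only [z1, z2, Finset.sum_const_zero, add_zero]

end
end

section
/- Let R be a ring and E a left R-module admitting a finite free resolution 0 → F_n → ⋯ → F_1 → F_0 → E → 0 by finitely generated free modules. If E is projective, then E is stably free, i.e., there exists a finitely generated free module F such that E ⊕ F is free of finite rank. -/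
theorem split_step {R F E : Type*} [Ring R] [AddCommGroup F] [Module R F]
    [AddCommGroup E] [Module R E] [Module.Projective R F]
    (ε : F →ₗ[R] E) (hsurj : Function.Surjective ε) (hproj : Module.Projective R E) :
    Nonempty (F ≃ₗ[R] E × LinearMap.ker ε) ∧ Module.Projective R (LinearMap.ker ε) := by
  haveI := hproj
  obtain ⟨s, hs⟩ := Module.projective_lifting_property ε LinearMap.id hsurj
  have hεs : ∀ e : E, ε (s e) = e := fun e => by
    have := LinearMap.congr_fun hs e; simpa using this
  have hmem : ∀ x : F, x - s (ε x) ∈ LinearMap.ker ε := by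
    intro x
    simp [LinearMap.mem_ker, map_sub, hεs]
  let q : F →ₗ[R] LinearMap.ker ε :=
    LinearMap.codRestrict (LinearMap.ker ε) (LinearMap.id - s ∘ₗ ε) hmem
  let f : F →ₗ[R] E × LinearMap.ker ε := LinearMap.prod ε q
  let g : E × LinearMap.ker ε →ₗ[R] F :=
    s ∘ₗ LinearMap.fst R E (LinearMap.ker ε) +
      (LinearMap.ker ε).subtype ∘ₗ LinearMap.snd R E (LinearMap.ker ε)
  have hgf : g ∘ₗ f = LinearMap.id := by
    apply LinearMap.ext
    intro x
    simp [f, g, q]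
  have hfg : f ∘ₗ g = LinearMap.id := by
    apply LinearMap.ext
    rintro ⟨e, ⟨k, hk⟩⟩
    have hεk : ε k = 0 := hk
    refine Prod.ext ?_ (Subtype.ext ?_)
    · simp [f, g, q, hεs, hεk]
    · simp [f, g, q, hεs, hεk]
  refine ⟨⟨LinearEquiv.ofLinear f g hfg hgf⟩, ?_⟩
  refine Module.Projective.of_split (LinearMap.ker ε).subtype q ?_
  ext ⟨k, hk⟩
  have : ε k = 0 := hk
  simp [q, this]

def finProdLequiv (R : Type*) [Ring R] (a b : ℕ) :
    ((Fin a → R) × (Fin b → R)) ≃ₗ[R] (Fin (a + b) → R) :=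
  (LinearEquiv.sumArrowLequivProdArrow (Fin a) (Fin b) R R).symm.trans
    (LinearEquiv.funCongrLeft R R finSumFinEquiv).symm

universe u v

theorem aux_stably_free (R : Type u) [Ring R] (n : ℕ) :
    ∀ (E : Type u) [AddCommGroup E] [Module R E] (r : ℕ → ℕ),
    (∀ i, n < i → r i = 0) →
    ∀ (d : (i : ℕ) → ((Fin (r (i + 1)) → R) →ₗ[R] (Fin (r i) → R)))
      (ε : (Fin (r 0) → R) →ₗ[R] E),
    Function.Surjective ε → LinearMap.ker ε = LinearMap.range (d 0) →
    (∀ i, LinearMap.ker (d i) = LinearMap.range (d (i + 1))) → Module.Projective R E →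
    ∃ m p : ℕ, Nonempty ((E × (Fin m → R)) ≃ₗ[R] (Fin p → R)) := by
  induction n with
  | zero =>
    intro E _ _ r hfin d ε hsurj hexact0 hexact hproj
    have hr1 : r 1 = 0 := hfin 1 one_pos
    haveI : Subsingleton (Fin (r 1) → R) := by rw [hr1]; infer_instance
    have hd0 : d 0 = 0 := Subsingleton.elim _ _
    have hker : LinearMap.ker ε = ⊥ := by rw [hexact0, hd0, LinearMap.range_zero]
    have hinj : Function.Injective ε := LinearMap.ker_eq_bot.mp hker
    refine ⟨0, r 0 + 0, ⟨?_⟩⟩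
    exact ((LinearEquiv.ofBijective ε ⟨hinj, hsurj⟩).symm.prodCongr
      (LinearEquiv.refl R (Fin 0 → R))).trans (finProdLequiv R (r 0) 0)
  | succ n ih =>
    intro E _ _ r hfin d ε hsurj hexact0 hexact hproj
    obtain ⟨⟨e⟩, hKproj⟩ := split_step ε hsurj hproj
    let ε' : (Fin (r 1) → R) →ₗ[R] LinearMap.ker ε :=
      LinearMap.codRestrict (LinearMap.ker ε) (d 0) (fun x => by
        rw [hexact0]; exact LinearMap.mem_range_self _ x)
    have hsurj' : Function.Surjective ε' := by
      rintro ⟨k, hk⟩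
      rw [hexact0] at hk
      obtain ⟨x, hx⟩ := hk
      exact ⟨x, Subtype.ext hx⟩
    have hker' : LinearMap.ker ε' = LinearMap.range (d 1) := by
      rw [LinearMap.ker_codRestrict, hexact 0]
    obtain ⟨m, p, ⟨eK⟩⟩ := ih (LinearMap.ker ε) (fun i => r (i + 1))
      (fun i hi => hfin (i + 1) (by omega)) (fun i => d (i + 1)) ε' hsurj' hker'
      (fun i => hexact (i + 1)) hKproj
    refine ⟨p, r 0 + m, ⟨?_⟩⟩
    exact (((LinearEquiv.refl R E).prodCongr eK.symm).trans
      ((LinearEquiv.prodAssoc R E (LinearMap.ker ε) (Fin m → R)).symm)).trans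
      ((e.symm.prodCongr (LinearEquiv.refl R (Fin m → R))).trans
        (finProdLequiv R (r 0) m))

/-- Let `R` be a ring and `E` a left `R`-module admitting a finite free
resolution `0 → F_n → ⋯ → F_1 → F_0 → E → 0` by finitely generated free modules (encoded by
ranks `r i`, vanishing for `i > n`, differentials `d i` and augmentation `ε`, with exactness
everywhere).  If `E` is projective then `E` is stably free: `E ⊕ R^m ≅ R^p` for some `m, p`. -/
theorem projective_of_finite_free_resolution_is_stably_free
    (R E : Type*) [Ring R] [AddCommGroup E] [Module R E]
    (n : ℕ) (r : ℕ → ℕ) (hfin : ∀ i, n < i → r i = 0)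
    (d : (i : ℕ) → ((Fin (r (i + 1)) → R) →ₗ[R] (Fin (r i) → R)))
    (ε : (Fin (r 0) → R) →ₗ[R] E)
    (hsurj : Function.Surjective ε)
    (hexact0 : LinearMap.ker ε = LinearMap.range (d 0))
    (hexact : ∀ i, LinearMap.ker (d i) = LinearMap.range (d (i + 1)))
    (hproj : Module.Projective R E) :
    ∃ m p : ℕ, Nonempty ((E × (Fin m → R)) ≃ₗ[R] (Fin p → R)) := by
  obtain ⟨⟨e⟩, hKproj⟩ := split_step ε hsurj hproj
  let ε' : (Fin (r 1) → R) →ₗ[R] LinearMap.ker ε :=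
    LinearMap.codRestrict (LinearMap.ker ε) (d 0) (fun x => by
      rw [hexact0]; exact LinearMap.mem_range_self _ x)
  have hsurj' : Function.Surjective ε' := by
    rintro ⟨k, hk⟩
    rw [hexact0] at hk
    obtain ⟨x, hx⟩ := hk
    exact ⟨x, Subtype.ext hx⟩
  have hker' : LinearMap.ker ε' = LinearMap.range (d 1) := by
    rw [LinearMap.ker_codRestrict, hexact 0]
  obtain ⟨m, p, ⟨eK⟩⟩ := aux_stably_free R n (LinearMap.ker ε) (fun i => r (i + 1))
    (fun i hi => hfin (i + 1) (by omega)) (fun i => d (i + 1)) ε' hsurj' hker'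
    (fun i => hexact (i + 1)) hKproj
  refine ⟨p, r 0 + m, ⟨?_⟩⟩
  exact (((LinearEquiv.refl R E).prodCongr eK.symm).trans
      ((LinearEquiv.prodAssoc R E (LinearMap.ker ε) (Fin m → R)).symm)).trans
      ((e.symm.prodCongr (LinearEquiv.refl R (Fin m → R))).trans
        (finProdLequiv R (r 0) m))
end

section
/- Let A be an associative k-algebra generated by elements u₁,…,u_N such that for all i < j, u_j u_i = q_{ij} u_i u_j + Σ_{s<i} Σ_t (α_{ij}^{st} u_s u_t + β_{ij}^{st} u_t u_s) for some nonzero scalars q_{ij} and scalars α_{ij}^{st}, β_{ij}^{st}. Then A is left and right Noetherian. -/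
namespace BGaux

open List

variable {N : ℕ}

/-! ### The monomial order on exponent vectors -/

/-- indicator exponent -/
def ev (x : Fin N) : Fin N → ℕ := fun i => if i = x then 1 else 0

/-- weight vector: `wv a m = Σ_{i ≥ m} a i`. -/
def wv (a : Fin N → ℕ) : Fin N → ℕ := fun m => ∑ i ∈ Finset.univ.filter (fun i => m ≤ i), a i

/-- the monomial order on exponents -/
def cless (a b : Fin N → ℕ) : Prop := toLex (wv a) < toLex (wv b)

lemma wv_add (a b : Fin N → ℕ) : wv (a + b) = wv a + wv b := by
  funext m; simp [wv, Finset.sum_add_distrib]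

lemma wv_ev (x : Fin N) : wv (ev x) = fun m => if m ≤ x then 1 else 0 := by
  funext m
  simp only [wv, ev]
  rw [Finset.sum_ite_eq' (Finset.univ.filter (fun i => m ≤ i)) x (fun _ => 1)]
  simp

lemma wv_inj : Function.Injective (wv (N := N)) := by
  intro a b h
  funext m
  have hsv : ∀ x : Fin N → ℕ, wv x m = x m + ∑ i ∈ Finset.univ.filter (fun i => m < i), x i := by
    intro x
    rw [wv]
    rw [show Finset.univ.filter (fun i => m ≤ i) = insert m (Finset.univ.filter (fun i => m < i)) by
      ext i; simp [Finset.mem_insert, le_iff_lt_or_eq, eq_comm, or_comm]]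
    rw [Finset.sum_insert (by simp)]
  have hsv2 : ∑ i ∈ Finset.univ.filter (fun i => m < i), a i
      = ∑ i ∈ Finset.univ.filter (fun i => m < i), b i := by
    by_cases hm : (m : ℕ) + 1 < N
    · have hfil : Finset.univ.filter (fun i => m < i) =
          Finset.univ.filter (fun i => (⟨m + 1, hm⟩ : Fin N) ≤ i) := by
        ext i; simp only [Finset.mem_filter, Finset.mem_univ, true_and]
        constructor
        · intro hi; exact Nat.succ_le_of_lt hi
        · intro hi; exact Nat.lt_of_succ_le hi
      have := congrFun h ⟨m + 1, hm⟩
      rw [wv, wv] at this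
      rw [hfil, this, ← hfil]
    · have hfil : Finset.univ.filter (fun i => m < i) = (∅ : Finset (Fin N)) := by
        ext i
        simp only [Finset.mem_filter, Finset.mem_univ, true_and, Finset.notMem_empty, iff_false]
        intro hi
        exact hm (lt_of_le_of_lt (Nat.succ_le_of_lt hi) i.isLt)
      simp [hfil]
  have := congrFun h m
  rw [hsv a, hsv b, hsv2] at this
  omega

lemma cless_wf : WellFounded (cless (N := N)) :=
  InvImage.wf (fun a => toLex (wv a)) wellFounded_lt

lemma cless_trans {a b c : Fin N → ℕ} (h1 : cless a b) (h2 : cless b c) : cless a c :=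
  lt_trans h1 h2

lemma cless_irrefl (a : Fin N → ℕ) : ¬ cless a a := lt_irrefl _

lemma cless_tri (a b : Fin N → ℕ) : cless a b ∨ a = b ∨ cless b a := by
  have htri := lt_trichotomy (toLex (wv a)) (toLex (wv b))
  rcases htri with h | h | h
  · exact Or.inl h
  · refine Or.inr (Or.inl (wv_inj ?_))
    have : (ofLex (toLex (wv a))) = ofLex (toLex (wv b)) := by rw [h]
    simpa using this
  · exact Or.inr (Or.inr h)

lemma lex_add_left {v w : Fin N → ℕ} (z : Fin N → ℕ) (h : toLex v < toLex w) :
    toLex (z + v) < toLex (z + w) := by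
  obtain ⟨m, h1, h2⟩ := h
  refine ⟨m, fun j hj => ?_, ?_⟩
  · have := h1 j hj
    show z j + v j = z j + w j
    have hvw : v j = w j := this
    rw [hvw]
  · show z m + v m < z m + w m
    have hvw : v m < w m := h2
    omega

lemma cless_add_left {a b : Fin N → ℕ} (c : Fin N → ℕ) (h : cless a b) :
    cless (c + a) (c + b) := by
  unfold cless at *
  rw [wv_add, wv_add]
  exact lex_add_left _ h

lemma cless_add_right {a b : Fin N → ℕ} (c : Fin N → ℕ) (h : cless a b) :
    cless (a + c) (b + c) := by
  rw [add_comm a c, add_comm b c]; exact cless_add_left c h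

/-- The key combinatorial lemma: replacing the pair `{i, j}` by `{s, t}` with `s < i < j`
strictly decreases the weight order. -/
lemma cless_core {s t i j : Fin N} (hsi : s < i) (hij : i < j) :
    cless (ev s + ev t) (ev i + ev j) := by
  have hjN : (j : ℕ) < N := j.isLt
  have hm0 : min (s : ℕ) (t : ℕ) + 1 < N := by
    have h1 : (s : ℕ) < (i : ℕ) := hsi
    have h2 : (i : ℕ) < (j : ℕ) := hij
    omega
  refine ⟨⟨min (s : ℕ) (t : ℕ) + 1, hm0⟩, ?_, ?_⟩
  · intro m hm
    have hmv : (m : ℕ) ≤ min (s : ℕ) (t : ℕ) := by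
      have : (m : ℕ) < min (s : ℕ) (t : ℕ) + 1 := hm
      omega
    show wv (ev s + ev t) m = wv (ev i + ev j) m
    simp only [wv_add, Pi.add_apply, wv_ev]
    have h1 : m ≤ s := by rw [Fin.le_def]; omega
    have h2 : m ≤ t := by rw [Fin.le_def]; omega
    have h3 : m ≤ i := by rw [Fin.le_def]; have : (s:ℕ) < i := hsi; omega
    have h4 : m ≤ j := by rw [Fin.le_def]; have : (s:ℕ) < i := hsi; have : (i:ℕ) < j := hij; omega
    rw [if_pos h1, if_pos h2, if_pos h3, if_pos h4]
  · show wv (ev s + ev t) ⟨min (s : ℕ) (t : ℕ) + 1, hm0⟩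
      < wv (ev i + ev j) ⟨min (s : ℕ) (t : ℕ) + 1, hm0⟩
    simp only [wv_add, Pi.add_apply, wv_ev]
    have hsv : (s:ℕ) < i := hsi
    have hiv : (i:ℕ) < j := hij
    have h3 : (⟨min (s : ℕ) (t : ℕ) + 1, hm0⟩ : Fin N) ≤ i := by rw [Fin.le_def]; simp; omega
    have h4 : (⟨min (s : ℕ) (t : ℕ) + 1, hm0⟩ : Fin N) ≤ j := by rw [Fin.le_def]; simp; omega
    rw [if_pos h3, if_pos h4]
    by_cases h1 : (⟨min (s : ℕ) (t : ℕ) + 1, hm0⟩ : Fin N) ≤ s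
    · have h2 : ¬ (⟨min (s : ℕ) (t : ℕ) + 1, hm0⟩ : Fin N) ≤ t := by
        rw [Fin.le_def] at h1 ⊢; simp at h1 ⊢; omega
      rw [if_pos h1, if_neg h2]
      omega
    · rw [if_neg h1]
      split <;> omega

/-! ### Words -/

/-- exponent vector of a word -/
def cnt (l : List (Fin N)) : Fin N → ℕ := fun i => l.count i

lemma cnt_append (l₁ l₂ : List (Fin N)) : cnt (l₁ ++ l₂) = cnt l₁ + cnt l₂ := by
  funext i; simp [cnt, List.count_append]

lemma cnt_cons (x : Fin N) (l : List (Fin N)) : cnt (x :: l) = ev x + cnt l := by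
  funext i
  simp only [cnt, ev, List.count_cons, Pi.add_apply]
  by_cases h : i = x
  · subst h; simp; omega
  · simp [h, Ne.symm h]

lemma cnt_pair (l₁ l₂ : List (Fin N)) (x y : Fin N) :
    cnt (l₁ ++ x :: y :: l₂) = (cnt l₁ + cnt l₂) + (ev x + ev y) := by
  rw [cnt_append, cnt_cons, cnt_cons]
  funext i; simp only [Pi.add_apply]; ring

/-- second component of the termination measure: `Σ_p (n - p) * l_p`. -/
def mu2 : List (Fin N) → ℕ
  | [] => 0
  | x :: xs => (x : ℕ) * (xs.length + 1) + mu2 xs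

lemma mu2_append (l₁ l₂ : List (Fin N)) :
    mu2 (l₁ ++ l₂) = mu2 l₁ + (l₁.map (Fin.val)).sum * l₂.length + mu2 l₂ := by
  induction l₁ with
  | nil => simp [mu2]
  | cons x xs ih =>
      simp only [List.cons_append, mu2, List.length_append, List.map_cons, List.sum_cons,
        List.append_eq, ih]
      ring

lemma mu2_swap {i j : Fin N} (hij : i < j) (l₁ l₂ : List (Fin N)) :
    mu2 (l₁ ++ i :: j :: l₂) < mu2 (l₁ ++ j :: i :: l₂) := by
  rw [mu2_append, mu2_append]
  simp only [List.length_cons, mu2]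
  have hij' : (i : ℕ) < (j : ℕ) := hij
  have e1 : (i:ℕ) * (l₂.length + 1 + 1) + ((j:ℕ) * (l₂.length + 1) + mu2 l₂)
      = ((i:ℕ) + (j:ℕ)) * (l₂.length + 1) + (i:ℕ) + mu2 l₂ := by ring
  have e2 : (j:ℕ) * (l₂.length + 1 + 1) + ((i:ℕ) * (l₂.length + 1) + mu2 l₂)
      = ((i:ℕ) + (j:ℕ)) * (l₂.length + 1) + (j:ℕ) + mu2 l₂ := by ring
  omega

lemma exists_descent {l : List (Fin N)} (h : ¬ l.Chain' (· ≤ ·)) :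
    ∃ (l₁ : List (Fin N)) (j i : Fin N) (l₂ : List (Fin N)),
      i < j ∧ l = l₁ ++ j :: i :: l₂ := by
  induction l with
  | nil => exact absurd List.isChain_nil h
  | cons x xs ih =>
      cases xs with
      | nil => exact absurd (List.isChain_singleton x) h
      | cons y t =>
          rw [show List.Chain' (· ≤ ·) (x :: y :: t) ↔ _ from List.isChain_cons_cons] at h
          push_neg at h
          by_cases hxy : x ≤ y
          · obtain ⟨l₁, j, i, l₂, hij, hl⟩ := ih (h hxy)
            exact ⟨x :: l₁, j, i, l₂, hij, by rw [hl]; rfl⟩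
          · exact ⟨[], x, y, t, lt_of_not_ge hxy, rfl⟩

/-! ### The canonical sorted word -/

/-- the sorted word with exponent vector `a` -/
def W (a : Fin N → ℕ) : List (Fin N) :=
  (List.finRange N).flatMap fun i => List.replicate (a i) i

lemma count_W (a : Fin N → ℕ) (z : Fin N) : (W a).count z = a z := by
  have key : ∀ L : List (Fin N),
      ((L.flatMap fun i => List.replicate (a i) i).count z)
        = (L.map (fun i => if z = i then a i else 0)).sum := by
    intro L
    induction L with
    | nil => simp
    | cons i L ih =>
        rw [List.flatMap_cons, List.count_append, ih, List.map_cons, List.sum_cons,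
          List.count_replicate]
        simp only [beq_iff_eq]
        by_cases h : i = z
        · subst h; simp
        · simp [h, Ne.symm h]
  rw [W, key]
  rw [← Fin.sum_univ_def]
  simp

lemma cnt_W (a : Fin N → ℕ) : cnt (W a) = a := by
  funext z; exact count_W a z

lemma W_sorted (a : Fin N → ℕ) : (W a).Pairwise (· ≤ ·) := by
  rw [W, List.flatMap_def, List.pairwise_flatten]
  refine ⟨?_, ?_⟩
  · intro l hl
    simp only [List.mem_map] at hl
    obtain ⟨i, _, rfl⟩ := hl
    exact List.pairwise_replicate.2 (Or.inr (le_refl i))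
  · have := List.pairwise_lt_finRange N
    refine (List.pairwise_map).2 ?_
    refine this.imp_of_mem ?_
    intro i j _ _ hij x hx y hy
    rw [List.eq_of_mem_replicate hx, List.eq_of_mem_replicate hy]
    exact le_of_lt hij

lemma sorted_eq_W {l : List (Fin N)} (h : l.Pairwise (· ≤ ·)) : l = W (cnt l) := by
  refine List.Perm.eq_of_pairwise' h (W_sorted (cnt l)) ?_
  rw [List.perm_iff_count]
  intro z
  rw [count_W]
  rfl

/-! ### The algebra side -/

section Algebra

variable (k : Type*) [Field k] {A : Type*} [Ring A] [Algebra k A] (u : Fin N → A)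

/-- the product of a word -/
def wp (l : List (Fin N)) : A := (l.map u).prod

/-- the ordered monomial -/
def mon (a : Fin N → ℕ) : A := ((List.finRange N).map (fun i => u i ^ a i)).prod

/-- the span of the monomials strictly below `b` -/
def Alow (b : Fin N → ℕ) : Submodule k A := Submodule.span k (mon u '' {c | cless c b})

/-- the span of the monomials at most `b` -/
def Ale (b : Fin N → ℕ) : Submodule k A :=
  Submodule.span k (mon u '' {c | cless c b ∨ c = b})

variable {k u}

lemma Alow_mono {b b' : Fin N → ℕ} (h : cless b b') : Alow k u b ≤ Alow k u b' := by
  refine Submodule.span_mono (Set.image_mono ?_)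
  intro c hc; exact cless_trans hc h

lemma Alow_le_Ale (b : Fin N → ℕ) : Alow k u b ≤ Ale k u b :=
  Submodule.span_mono (Set.image_mono (fun c hc => Or.inl hc))

lemma Ale_mono {b b' : Fin N → ℕ} (h : cless b b') : Ale k u b ≤ Ale k u b' := by
  refine Submodule.span_mono (Set.image_mono ?_)
  rintro c (hc | rfl)
  · exact Or.inl (cless_trans hc h)
  · exact Or.inl h

lemma mon_mem_Alow {c b : Fin N → ℕ} (h : cless c b) : mon u c ∈ Alow k u b :=
  Submodule.subset_span ⟨c, h, rfl⟩

lemma mon_mem_Ale (b : Fin N → ℕ) : mon u b ∈ Ale k u b :=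
  Submodule.subset_span ⟨b, Or.inr rfl, rfl⟩

lemma mem_Ale_iff {x : A} {b : Fin N → ℕ} :
    x ∈ Ale k u b ↔ ∃ lam : k, x - lam • mon u b ∈ Alow k u b := by
  have hset : mon u '' {c | cless c b ∨ c = b}
      = insert (mon u b) (mon u '' {c | cless c b}) := by
    rw [show {c | cless c b ∨ c = b} = {c | cless c b} ∪ {b} by
      ext c; simp [Set.mem_union, or_comm]]
    rw [Set.image_union, Set.image_singleton, Set.union_comm]
    rfl
  rw [Ale, hset, Submodule.mem_span_insert]
  constructor
  · rintro ⟨lam, z, hz, rfl⟩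
    exact ⟨lam, by simpa [Alow] using hz⟩
  · rintro ⟨lam, hz⟩
    exact ⟨lam, x - lam • mon u b, hz, by abel⟩

lemma wp_append (l₁ l₂ : List (Fin N)) : wp u (l₁ ++ l₂) = wp u l₁ * wp u l₂ := by
  simp [wp, List.prod_append]

lemma wp_split (l₁ l₂ : List (Fin N)) (x y : Fin N) :
    wp u (l₁ ++ x :: y :: l₂) = wp u l₁ * ((u x * u y) * wp u l₂) := by
  simp [wp, List.prod_append, List.prod_cons, mul_assoc]

lemma wp_W (a : Fin N → ℕ) : wp u (W a) = mon u a := by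
  rw [wp, W, List.flatMap_def, List.map_flatten, mon]
  rw [List.prod_flatten, List.map_map, List.map_map]
  simp only [Function.comp_def, List.map_replicate, List.prod_replicate]

end Algebra

/-! ### Straightening -/

section Straighten

variable {k : Type*} [Field k] {A : Type*} [Ring A] [Algebra k A] {u : Fin N → A}
variable {q : Fin N → Fin N → k} {α β : Fin N → Fin N → Fin N → Fin N → k}

theorem straighten (hq : ∀ i j, q i j ≠ 0)
    (hrel : ∀ i j : Fin N, i < j →
      u j * u i = q i j • (u i * u j) +
        ∑ s : Fin N, ∑ t : Fin N,
          if s < i then α i j s t • (u s * u t) + β i j s t • (u t * u s) else 0) :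
    ∀ l : List (Fin N), ∃ lam : k, lam ≠ 0 ∧
      wp u l - lam • mon u (cnt l) ∈ Alow k u (cnt l) := by
  have hwf : WellFounded (fun l l' : List (Fin N) =>
      Prod.Lex (· < ·) (· < ·) (toLex (wv (cnt l)), mu2 l) (toLex (wv (cnt l')), mu2 l')) :=
    InvImage.wf (fun l => ((toLex (wv (cnt l)), mu2 l) : Lex (Fin N → ℕ) ×ₗ ℕ))
      (WellFounded.prod_lex IsWellFounded.wf Nat.lt_wfRel.wf)
  intro l
  induction l using hwf.induction with
  | _ l IH =>
  by_cases hc : l.Chain' (· ≤ ·)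
  · refine ⟨1, one_ne_zero, ?_⟩
    have hl : l = W (cnt l) := sorted_eq_W ((List.isChain_iff_pairwise).1 hc)
    have : wp u l = mon u (cnt l) := by
      conv_lhs => rw [hl]
      exact wp_W (cnt l)
    rw [this, one_smul, sub_self]
    exact zero_mem _
  · obtain ⟨l₁, jj, ii, l₂, hji, hl⟩ := exists_descent hc
    subst hl
    -- the descent-swap word
    have hcnt : cnt (l₁ ++ ii :: jj :: l₂) = cnt (l₁ ++ jj :: ii :: l₂) := by
      rw [cnt_pair, cnt_pair]
      funext z; simp only [Pi.add_apply]; ring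
    -- lower words
    have hcl : ∀ x y : Fin N, x < ii →
        cless (cnt (l₁ ++ x :: y :: l₂)) (cnt (l₁ ++ jj :: ii :: l₂)) := by
      intro x y hx
      rw [cnt_pair, cnt_pair]
      have h2 : ev jj + ev ii = ev ii + ev jj := by ring
      rw [h2]
      exact cless_add_left _ (cless_core hx hji)
    have hcl' : ∀ x y : Fin N, y < ii →
        cless (cnt (l₁ ++ x :: y :: l₂)) (cnt (l₁ ++ jj :: ii :: l₂)) := by
      intro x y hy
      have h2 : cnt (l₁ ++ x :: y :: l₂) = cnt (l₁ ++ y :: x :: l₂) := by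
        rw [cnt_pair, cnt_pair]
        funext z; simp only [Pi.add_apply]; ring
      rw [h2]
      exact hcl y x hy
    have hlow : ∀ x y : Fin N,
        cless (cnt (l₁ ++ x :: y :: l₂)) (cnt (l₁ ++ jj :: ii :: l₂)) →
        wp u (l₁ ++ x :: y :: l₂) ∈ Alow k u (cnt (l₁ ++ jj :: ii :: l₂)) := by
      intro x y hxy
      obtain ⟨lam'', h0, hm⟩ := IH (l₁ ++ x :: y :: l₂) (Prod.Lex.left _ _ hxy)
      have hdec : wp u (l₁ ++ x :: y :: l₂)
          = lam'' • mon u (cnt (l₁ ++ x :: y :: l₂))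
            + (wp u (l₁ ++ x :: y :: l₂) - lam'' • mon u (cnt (l₁ ++ x :: y :: l₂))) := by
        rw [add_comm]; exact (sub_add_cancel _ _).symm
      rw [hdec]
      exact add_mem (Submodule.smul_mem _ _ (mon_mem_Alow hxy)) ((Alow_mono hxy) hm)
    -- the rewriting step
    have e2 : wp u (l₁ ++ jj :: ii :: l₂)
        = q ii jj • wp u (l₁ ++ ii :: jj :: l₂)
          + ∑ s : Fin N, ∑ t : Fin N,
              if s < ii then α ii jj s t • wp u (l₁ ++ s :: t :: l₂)
                + β ii jj s t • wp u (l₁ ++ t :: s :: l₂) else 0 := by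
      rw [wp_split, hrel ii jj hji]
      simp only [wp_split]
      simp only [add_mul, mul_add, Finset.sum_mul, Finset.mul_sum, ite_mul, mul_ite,
        zero_mul, mul_zero, smul_mul_assoc, mul_smul_comm, mul_assoc]
    obtain ⟨lam', hlam', hmem'⟩ := IH (l₁ ++ ii :: jj :: l₂) (by
      have : toLex (wv (cnt (l₁ ++ ii :: jj :: l₂))) = toLex (wv (cnt (l₁ ++ jj :: ii :: l₂))) := by
        rw [hcnt]
      rw [show ((toLex (wv (cnt (l₁ ++ ii :: jj :: l₂))), mu2 (l₁ ++ ii :: jj :: l₂))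
            : Lex (Fin N → ℕ) × ℕ)
          = ((toLex (wv (cnt (l₁ ++ jj :: ii :: l₂)))), mu2 (l₁ ++ ii :: jj :: l₂)) by rw [this]]
      exact Prod.Lex.right _ (mu2_swap hji l₁ l₂))
    refine ⟨q ii jj * lam', mul_ne_zero (hq ii jj) hlam', ?_⟩
    rw [e2]
    have key : q ii jj • wp u (l₁ ++ ii :: jj :: l₂)
        - (q ii jj * lam') • mon u (cnt (l₁ ++ jj :: ii :: l₂))
        ∈ Alow k u (cnt (l₁ ++ jj :: ii :: l₂)) := by
      have h1 := Submodule.smul_mem (Alow k u (cnt (l₁ ++ ii :: jj :: l₂))) (q ii jj) hmem'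
      rw [smul_sub, smul_smul] at h1
      rwa [hcnt] at h1
    have hT : (∑ s : Fin N, ∑ t : Fin N,
        if s < ii then α ii jj s t • wp u (l₁ ++ s :: t :: l₂)
          + β ii jj s t • wp u (l₁ ++ t :: s :: l₂) else 0)
        ∈ Alow k u (cnt (l₁ ++ jj :: ii :: l₂)) := by
      refine Submodule.sum_mem _ fun s _ => Submodule.sum_mem _ fun t _ => ?_
      split_ifs with hsi
      · exact add_mem (Submodule.smul_mem _ _ (hlow s t (hcl s t hsi)))
          (Submodule.smul_mem _ _ (hlow t s (hcl' t s hsi)))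
      · exact zero_mem _
    have hre : q ii jj • wp u (l₁ ++ ii :: jj :: l₂)
        + (∑ s : Fin N, ∑ t : Fin N,
            if s < ii then α ii jj s t • wp u (l₁ ++ s :: t :: l₂)
              + β ii jj s t • wp u (l₁ ++ t :: s :: l₂) else 0)
        - (q ii jj * lam') • mon u (cnt (l₁ ++ jj :: ii :: l₂))
        = (q ii jj • wp u (l₁ ++ ii :: jj :: l₂)
            - (q ii jj * lam') • mon u (cnt (l₁ ++ jj :: ii :: l₂)))
          + (∑ s : Fin N, ∑ t : Fin N,
            if s < ii then α ii jj s t • wp u (l₁ ++ s :: t :: l₂)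
              + β ii jj s t • wp u (l₁ ++ t :: s :: l₂) else 0) :=
      add_sub_right_comm _ _ _
    rw [hre]
    exact add_mem key hT

end Straighten


/-! ### Dickson's lemma and the Noetherian property -/

section Noetherian

variable {k : Type*} [Field k] {A : Type*} [Ring A] [Algebra k A] {u : Fin N → A}
variable {q : Fin N → Fin N → k} {α β : Fin N → Fin N → Fin N → Fin N → k}

/-- Dickson's lemma: every set of exponent vectors has a finite dominating subset. -/
lemma dickson (E : Set (Fin N → ℕ)) :
    ∃ D : Finset (Fin N → ℕ), ↑D ⊆ E ∧ ∀ a ∈ E, ∃ d ∈ D, d ≤ a := by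
  classical
  by_contra hcon
  push_neg at hcon
  choose! g hg1 hg2 using hcon
  let F : ℕ → Finset (Fin N → ℕ) := fun n => Nat.rec ∅ (fun _ D => insert (g D) D) n
  have hF : ∀ n, F (n + 1) = insert (g (F n)) (F n) := fun n => rfl
  have hFsub : ∀ n, ∀ a ∈ F n, a ∈ E := by
    intro n
    induction n with
    | zero =>
        intro a ha
        exact absurd ha (by simp [F])
    | succ n ih =>
        intro a ha
        rw [hF, Finset.mem_insert] at ha
        rcases ha with rfl | ha
        · exact hg1 (F n) ih
        · exact ih a ha
  have hmono : ∀ m n, m ≤ n → F m ⊆ F n := by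
    intro m n hmn
    induction n with
    | zero => rw [Nat.le_zero] at hmn; subst hmn; exact Finset.Subset.refl _
    | succ n ih =>
        rcases Nat.lt_or_ge m (n + 1) with h | h
        · refine (ih (Nat.lt_succ_iff.1 h)).trans ?_
          rw [hF]
          exact Finset.subset_insert _ _
        · have : m = n + 1 := le_antisymm hmn h
          subst this; exact Finset.Subset.refl _
  set f : ℕ → (Fin N → ℕ) := fun n => g (F n) with hf
  have hfE : ∀ n, f n ∈ E := fun n => hg1 (F n) (hFsub n)
  have hbad : ∀ m n, m < n → ¬ f m ≤ f n := by
    intro m n hmn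
    have hmem : f m ∈ F n := by
      have h1 : f m ∈ F (m + 1) := by rw [hF]; exact Finset.mem_insert_self _ _
      exact hmono (m + 1) n hmn h1
    exact hg2 (F n) (hFsub n) (f m) hmem
  have hp : E.IsPWO :=
    (Set.IsPWO.pi (s := fun _ : Fin N => (Set.univ : Set ℕ))
      (fun _ => Set.isPWO_of_wellQuasiOrderedLE _)).mono (fun x _ => by simp)
  obtain ⟨m, n, hmn, hle⟩ := Set.PartiallyWellOrderedOn.exists_lt hp hfE
  exact hbad m n hmn hle

lemma escape_low {b : Fin N → ℕ} {x : A} (hx : x ∈ Alow k u b) :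
    x = 0 ∨ ∃ a', cless a' b ∧ x ∈ Ale k u a' := by
  have hx' : x ∈ Submodule.span k (mon u '' {c | cless c b}) := hx
  clear hx
  induction hx' using Submodule.span_induction with
  | mem y hy =>
      obtain ⟨c, hc, rfl⟩ := hy
      exact Or.inr ⟨c, hc, mon_mem_Ale c⟩
  | zero => exact Or.inl rfl
  | add x y hxx hyy ihx ihy =>
      rcases ihx with rfl | ⟨ax, hax, hx1⟩
      · simpa using ihy
      rcases ihy with rfl | ⟨ay, hay, hy1⟩
      · exact Or.inr ⟨ax, hax, by simpa using hx1⟩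
      rcases cless_tri ax ay with h | h | h
      · exact Or.inr ⟨ay, hay, add_mem ((Ale_mono h) hx1) hy1⟩
      · subst h; exact Or.inr ⟨ax, hax, add_mem hx1 hy1⟩
      · exact Or.inr ⟨ax, hax, add_mem hx1 ((Ale_mono h) hy1)⟩
  | smul r x hxx ihx =>
      rcases ihx with rfl | ⟨a', ha', hx1⟩
      · exact Or.inl (smul_zero r)
      · exact Or.inr ⟨a', ha', Submodule.smul_mem _ _ hx1⟩

lemma escape_range {x : A} (hx : x ∈ Submodule.span k (Set.range (mon u))) :
    x = 0 ∨ ∃ a, x ∈ Ale k u a := by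
  induction hx using Submodule.span_induction with
  | mem y hy =>
      obtain ⟨a, rfl⟩ := hy
      exact Or.inr ⟨a, mon_mem_Ale a⟩
  | zero => exact Or.inl rfl
  | add x y hxx hyy ihx ihy =>
      rcases ihx with rfl | ⟨ax, hx1⟩
      · simpa using ihy
      rcases ihy with rfl | ⟨ay, hy1⟩
      · exact Or.inr ⟨ax, by simpa using hx1⟩
      rcases cless_tri ax ay with h | h | h
      · exact Or.inr ⟨ay, add_mem ((Ale_mono h) hx1) hy1⟩
      · subst h; exact Or.inr ⟨ax, add_mem hx1 hy1⟩
      · exact Or.inr ⟨ax, add_mem hx1 ((Ale_mono h) hy1)⟩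
  | smul r x hxx ihx =>
      rcases ihx with rfl | ⟨a', hx1⟩
      · exact Or.inl (smul_zero r)
      · exact Or.inr ⟨a', Submodule.smul_mem _ _ hx1⟩

variable (hq : ∀ i j, q i j ≠ 0)
  (hrel : ∀ i j : Fin N, i < j →
    u j * u i = q i j • (u i * u j) +
      ∑ s : Fin N, ∑ t : Fin N,
        if s < i then α i j s t • (u s * u t) + β i j s t • (u t * u s) else 0)

include hq hrel

lemma mon_mul_mon (b d : Fin N → ℕ) : ∃ nu : k, nu ≠ 0 ∧
    mon u b * mon u d - nu • mon u (b + d) ∈ Alow k u (b + d) := by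
  obtain ⟨nu, h0, hm⟩ := straighten hq hrel (W b ++ W d)
  refine ⟨nu, h0, ?_⟩
  have h1 : cnt (W b ++ W d) = b + d := by rw [cnt_append, cnt_W, cnt_W]
  have h2 : wp u (W b ++ W d) = mon u b * mon u d := by rw [wp_append, wp_W, wp_W]
  rw [h1, h2] at hm
  exact hm

lemma mon_mul_low (b d : Fin N → ℕ) {x : A} (hx : x ∈ Alow k u d) :
    mon u b * x ∈ Alow k u (b + d) := by
  have hx' : x ∈ Submodule.span k (mon u '' {c | cless c d}) := hx
  clear hx
  induction hx' using Submodule.span_induction with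
  | mem y hy =>
      obtain ⟨c, hc, rfl⟩ := hy
      obtain ⟨nu, h0, hm⟩ := mon_mul_mon hq hrel b c
      have hrw : mon u b * mon u c
          = nu • mon u (b + c) + (mon u b * mon u c - nu • mon u (b + c)) := by
        rw [add_comm]; exact (sub_add_cancel _ _).symm
      rw [hrw]
      have hbc : cless (b + c) (b + d) := cless_add_left b hc
      exact add_mem (Submodule.smul_mem _ _ (mon_mem_Alow hbc)) ((Alow_mono hbc) hm)
  | zero => rw [mul_zero]; exact zero_mem _
  | add x y hxx hyy ihx ihy => rw [mul_add]; exact add_mem ihx ihy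
  | smul r x hxx ihx => rw [mul_smul_comm]; exact Submodule.smul_mem _ _ ihx

lemma list_of_mem_range {L : List A} (hL : ∀ z ∈ L, z ∈ Set.range u) :
    ∃ l : List (Fin N), L = l.map u := by
  induction L with
  | nil => exact ⟨[], rfl⟩
  | cons z L ih =>
      obtain ⟨l, rfl⟩ := ih (fun w hw => hL w (List.mem_cons_of_mem _ hw))
      obtain ⟨i, rfl⟩ := hL z List.mem_cons_self
      exact ⟨i :: l, rfl⟩

lemma span_mon (hgen : Algebra.adjoin k (Set.range u) = ⊤) (x : A) :
    x ∈ Submodule.span k (Set.range (mon u)) := by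
  have h1 : x ∈ Subalgebra.toSubmodule (Algebra.adjoin k (Set.range u)) := by
    rw [hgen]; trivial
  rw [Algebra.adjoin_eq_span] at h1
  refine Submodule.span_le.2 ?_ h1
  intro y hy
  obtain ⟨L, hL, rfl⟩ := Submonoid.exists_list_of_mem_closure hy
  obtain ⟨l, rfl⟩ := list_of_mem_range hq hrel hL
  obtain ⟨lam, h0, hm⟩ := straighten hq hrel l
  have hrw : wp u l = lam • mon u (cnt l) + (wp u l - lam • mon u (cnt l)) := by
    rw [add_comm]; exact (sub_add_cancel _ _).symm
  show (l.map u).prod ∈ _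
  rw [show (l.map u).prod = wp u l from rfl, hrw]
  refine Submodule.add_mem _ (Submodule.smul_mem _ _ (Submodule.subset_span ⟨cnt l, rfl⟩)) ?_
  exact Submodule.span_mono (Set.image_subset_range _ _) hm

theorem left_noetherian (hgen : Algebra.adjoin k (Set.range u) = ⊤) :
    IsNoetherianRing A := by
  rw [isNoetherianRing_iff, isNoetherian_def]
  intro I
  classical
  set E : Set (Fin N → ℕ) := {a | ∃ x, x ∈ I ∧ x ∈ Ale k u a ∧ x ∉ Alow k u a} with hE
  obtain ⟨D, hD1, hD2⟩ := dickson E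
  have hEx : ∀ d ∈ D, ∃ x, x ∈ I ∧ x ∈ Ale k u d ∧ x ∉ Alow k u d := fun d hd => hD1 hd
  choose f hfI hfle hfnl using hEx
  set G : Finset A := D.attach.image (fun d => f d.1 d.2) with hG
  set J : Submodule A A := Submodule.span A (↑G : Set A) with hJ
  have hJle : J ≤ I := by
    rw [hJ, Submodule.span_le]
    intro y hy
    simp only [hG, Finset.coe_image, Set.mem_image, Finset.mem_coe, Finset.mem_attach] at hy
    obtain ⟨d, -, rfl⟩ := hy
    exact hfI _ _
  have hwfc : WellFounded (cless (N := N)) := cless_wf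
  have hmain : ∀ a : Fin N → ℕ, ∀ x, x ∈ I → x ∈ Ale k u a → x ∈ J := by
    intro a
    induction a using hwfc.induction with
    | _ a IH =>
    intro x hxI hxle
    by_cases hxlow : x ∈ Alow k u a
    · rcases escape_low hxlow with rfl | ⟨a', ha', hx'⟩
      · exact zero_mem _
      · exact IH a' ha' x hxI hx'
    · have haE : a ∈ E := ⟨x, hxI, hxle, hxlow⟩
      obtain ⟨d, hdD, hda⟩ := hD2 a haE
      set g : A := f d hdD with hgdef
      obtain ⟨mu, hmu⟩ := mem_Ale_iff.1 (hfle d hdD)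
      have hmu0 : mu ≠ 0 := by
        intro h
        apply hfnl d hdD
        simpa [h] using hmu
      set b : Fin N → ℕ := fun i => a i - d i with hb
      have hbd : b + d = a := by
        funext i
        have h8 : d i ≤ a i := by
          have h9 := hda; rw [Pi.le_def] at h9; exact h9 i
        simp only [Pi.add_apply, hb]
        omega
      obtain ⟨nu, hnu0, hnu⟩ := mon_mul_mon hq hrel b d
      have hgG : g ∈ (↑G : Set A) := by
        simp only [hG, Finset.coe_image, Set.mem_image, Finset.mem_coe, Finset.mem_attach]
        exact ⟨⟨d, hdD⟩, trivial, rfl⟩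
      have hgJ : mon u b * g ∈ J := by
        have h1 : g ∈ J := Submodule.subset_span hgG
        have h2 := Submodule.smul_mem J (mon u b) h1
        rwa [smul_eq_mul] at h2
      have hdec : mon u b * g - (mu * nu) • mon u a ∈ Alow k u a := by
        have e2 : mon u b * g - (mu * nu) • mon u a
            = (mu • (mon u b * mon u d) - (mu * nu) • mon u a)
              + (mon u b * g - mu • (mon u b * mon u d)) :=
          (sub_add_sub_cancel' _ _ _).symm
        rw [e2]
        refine add_mem ?_ ?_
        · have h3 := Submodule.smul_mem (Alow k u (b + d)) mu hnu
          rw [smul_sub, smul_smul] at h3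
          rwa [hbd] at h3
        · have h4 : g - mu • mon u d ∈ Alow k u d := hmu
          have h5 := mon_mul_low hq hrel b d h4
          rw [mul_sub, mul_smul_comm] at h5
          rwa [hbd] at h5
      obtain ⟨lam, hlam⟩ := mem_Ale_iff.1 hxle
      have hxmod : x - (lam * (mu * nu)⁻¹) • (mon u b * g) ∈ Alow k u a := by
        have h3 := Submodule.smul_mem (Alow k u a) (lam * (mu * nu)⁻¹) hdec
        rw [smul_sub, smul_smul] at h3
        have hsc : lam * (mu * nu)⁻¹ * (mu * nu) = lam := by
          field_simp
        rw [hsc] at h3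
        have e3 : x - (lam * (mu * nu)⁻¹) • (mon u b * g)
            = (x - lam • mon u a)
              - ((lam * (mu * nu)⁻¹) • (mon u b * g) - lam • mon u a) :=
          (sub_sub_sub_cancel_right _ _ _).symm
        rw [e3]
        exact sub_mem hlam h3
      have hbgI : mon u b * g ∈ I := hJle hgJ
      have hxc : x - (lam * (mu * nu)⁻¹) • (mon u b * g) ∈ I := by
        refine sub_mem hxI ?_
        rw [Algebra.smul_def]
        have h6 := Submodule.smul_mem I (algebraMap k A (lam * (mu * nu)⁻¹)) hbgI
        rwa [smul_eq_mul] at h6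
      rcases escape_low hxmod with h0 | ⟨a', ha', hx'⟩
      · have hxeq : x = (lam * (mu * nu)⁻¹) • (mon u b * g) := by
          have := sub_eq_zero.1 h0; exact this
        rw [hxeq, Algebra.smul_def]
        have h7 := Submodule.smul_mem J (algebraMap k A (lam * (mu * nu)⁻¹)) hgJ
        rwa [smul_eq_mul] at h7
      · have hxJ' : x - (lam * (mu * nu)⁻¹) • (mon u b * g) ∈ J :=
          IH a' ha' _ hxc hx'
        have hxeq : x = (x - (lam * (mu * nu)⁻¹) • (mon u b * g))
            + (lam * (mu * nu)⁻¹) • (mon u b * g) := (sub_add_cancel _ _).symm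
        rw [hxeq]
        refine add_mem hxJ' ?_
        rw [Algebra.smul_def]
        have h7 := Submodule.smul_mem J (algebraMap k A (lam * (mu * nu)⁻¹)) hgJ
        rwa [smul_eq_mul] at h7
  have hIJ : I = J := by
    refine le_antisymm ?_ hJle
    intro x hxI
    rcases escape_range (span_mon hq hrel hgen x) with rfl | ⟨a, ha⟩
    · exact zero_mem _
    · exact hmain a x hxI ha
  exact ⟨G, by rw [← hJ, hIJ]⟩

end Noetherian

end BGaux

/-- Brown–Goodearl criterion.  Let `A` be an associative `k`-algebra
generated by `u 0, …, u (N-1)` such that for all `i < j`,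
`u j * u i = q i j • (u i * u j) + Σ_{s < i} Σ_t (α i j s t • (u s * u t) + β i j s t • (u t * u s))`
with `q i j ≠ 0`.  Then `A` is left and right Noetherian. -/
theorem noetherian_of_skew_commutation_relations
    (k A : Type*) [Field k] [Ring A] [Algebra k A] (N : ℕ) (u : Fin N → A)
    (hgen : Algebra.adjoin k (Set.range u) = ⊤)
    (q : Fin N → Fin N → k) (hq : ∀ i j, q i j ≠ 0)
    (α β : Fin N → Fin N → Fin N → Fin N → k)
    (hrel : ∀ i j : Fin N, i < j →
      u j * u i = q i j • (u i * u j) +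
        ∑ s : Fin N, ∑ t : Fin N,
          if s < i then α i j s t • (u s * u t) + β i j s t • (u t * u s) else 0) :
    IsNoetherianRing A ∧ IsNoetherianRing Aᵐᵒᵖ := by
  constructor
  · exact BGaux.left_noetherian hq hrel hgen
  · let v : Fin N → Aᵐᵒᵖ := fun i => MulOpposite.op (u i)
    have hgen' : Algebra.adjoin k (Set.range v) = ⊤ := by
      have h1 : Set.range v = MulOpposite.unop ⁻¹' (Set.range u) := by
        ext x
        constructor
        · rintro ⟨i, rfl⟩; exact ⟨i, rfl⟩
        · rintro ⟨i, hi⟩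
          refine ⟨i, ?_⟩
          show MulOpposite.op (u i) = x
          rw [hi, MulOpposite.op_unop]
      rw [h1, ← Subalgebra.op_adjoin, hgen, Subalgebra.op_top]
    have hrel' : ∀ i j : Fin N, i < j →
        v j * v i = (q i j)⁻¹ • (v i * v j) +
          ∑ s : Fin N, ∑ t : Fin N,
            if s < i then (-((q i j)⁻¹ * β i j s t)) • (v s * v t)
              + (-((q i j)⁻¹ * α i j s t)) • (v t * v s) else 0 := by
      intro i j hij
      have h0 := hrel i j hij
      have key : u i * u j = (q i j)⁻¹ • (u j * u i)
          - (q i j)⁻¹ • (∑ s : Fin N, ∑ t : Fin N,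
              if s < i then α i j s t • (u s * u t) + β i j s t • (u t * u s) else 0) := by
        rw [h0, smul_add, inv_smul_smul₀ (hq i j), add_sub_cancel_right]
      have e0 : ∀ x : A, MulOpposite.op x = (MulOpposite.opAddEquiv (α := A)) x := fun _ => rfl
      have hS : MulOpposite.op (∑ s : Fin N, ∑ t : Fin N,
            if s < i then α i j s t • (u s * u t) + β i j s t • (u t * u s) else 0)
          = ∑ s : Fin N, ∑ t : Fin N,
            if s < i then α i j s t • (v t * v s) + β i j s t • (v s * v t) else 0 := by
        rw [e0, map_sum]
        refine Finset.sum_congr rfl fun s _ => ?_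
        rw [map_sum]
        refine Finset.sum_congr rfl fun t _ => ?_
        by_cases h : s < i
        · rw [if_pos h, if_pos h]
          show MulOpposite.op _ = _
          rw [MulOpposite.op_add, MulOpposite.op_smul, MulOpposite.op_smul,
            MulOpposite.op_mul, MulOpposite.op_mul]
        · rw [if_neg h, if_neg h]
          exact map_zero _
      have hvji : v j * v i = MulOpposite.op (u i * u j) := (MulOpposite.op_mul _ _).symm
      rw [hvji, key, MulOpposite.op_sub, MulOpposite.op_smul, MulOpposite.op_smul, hS]
      have hvij : MulOpposite.op (u j * u i) = v i * v j := MulOpposite.op_mul _ _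
      rw [hvij, sub_eq_add_neg]
      congr 1
      rw [← neg_smul, Finset.smul_sum]
      refine Finset.sum_congr rfl fun s _ => ?_
      rw [Finset.smul_sum]
      refine Finset.sum_congr rfl fun t _ => ?_
      by_cases h : s < i
      · rw [if_pos h, if_pos h, smul_add, smul_smul, smul_smul, add_comm, neg_mul, neg_mul]
      · rw [if_neg h, if_neg h, smul_zero]
    exact BGaux.left_noetherian (fun i j => inv_ne_zero (hq i j)) hrel' hgen'
end
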